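/- Let G, R, m and x be as in the hypotheses of the Θ-construction (so G is non-abelian, Cay(G,R) is a GRR with at most one isolated vertex in the induced subgraph on R whose non-isolated part generates G, and x satisfies one of conditions (1),(2),(3)). Then for every i ∈ {0,…,m−1} and every automorphism φ of Θᵐ(G,R,x), the image of the block G_i := G×{i} under φ is again one of the blocks G_0,…,G_{m−1}. -/

import Mathlib

/-- A permutation `σ` of the vertex set is an automorphism of the simple graph `Γ`. -/
def IsGraphAut {V : Type*} (Γ : SimpleGraph V) (σ : Equiv.Perm V) : Prop :=
  ∀ u v : V, Γ.Adj (σ u) (σ v) ↔ Γ.Adj u v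

/-- The Cayley graph `Cay(G,R)`: `g` and `h` are adjacent iff `h * g⁻¹ ∈ R`. -/
def Cay (G : Type*) [Group G] (R : Set G) : SimpleGraph G :=
  SimpleGraph.fromRel (fun g h => h * g⁻¹ ∈ R)

/-- `Cay(G,R)` is a GRR for `G`: every automorphism is a right translation. -/
def IsCayleyGRR (G : Type*) [Group G] (R : Set G) : Prop :=
  ∀ σ : Equiv.Perm G, IsGraphAut (Cay G R) σ → ∃ g : G, ∀ h : G, σ h = h * g

/-- The set of isolated vertices of the subgraph of `Cay(G,R)` induced on `R`. -/
def cayIso (G : Type*) [Group G] (R : Set G) : Set G :=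
  {v : G | v ∈ R ∧ ∀ u ∈ R, ¬ (Cay G R).Adj v u}

/-- The graph `Θᵐ(G,R,x)` in cases (1) and (3): vertex set `G × {0,…,m−1}`, with edges
`{g_i,(rg)_i}` for `r ∈ R`, `{g_i, g_{i+1}}`, and `{g_0,(xg)_{m−1}}`. -/
def ThetaA (G : Type*) [Group G] (m : ℕ) (R : Set G) (x : G) :
    SimpleGraph (G × Fin m) :=
  SimpleGraph.fromRel (fun p q =>
    (p.2 = q.2 ∧ q.1 * p.1⁻¹ ∈ R) ∨
    (q.2.val = p.2.val + 1 ∧ q.1 = p.1) ∨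
    (p.2.val = 0 ∧ q.2.val = m - 1 ∧ q.1 = x * p.1))

/-- The graph `Θ²(G,R,x)` in case (2): vertex set `G × {0,1}`, with edges
`{g_0,(rg)_0}`, `{g_0,(rg)_1}` for `r ∈ R`, and `{g_0,(xg)_1}`. -/
def ThetaB (G : Type*) [Group G] (R : Set G) (x : G) : SimpleGraph (G × Fin 2) :=
  SimpleGraph.fromRel (fun p q =>
    p.2.val = 0 ∧ ((q.2.val = 0 ∧ q.1 * p.1⁻¹ ∈ R) ∨ (q.2.val = 1 ∧ q.1 * p.1⁻¹ ∈ R) ∨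
      (q.2.val = 1 ∧ q.1 = x * p.1)))


section ThetaAux

/-- The "edge in a triangle" relation of a graph. -/
def TriRel {V : Type*} (Γ : SimpleGraph V) (u v : V) : Prop :=
  Γ.Adj u v ∧ ∃ w, Γ.Adj u w ∧ Γ.Adj v w

variable {V : Type*} {Γ : SimpleGraph V} {σ : Equiv.Perm V}

variable {V : Type*} {Γ : SimpleGraph V} {σ : Equiv.Perm V}

lemma aut_inv (h : IsGraphAut Γ σ) : IsGraphAut Γ σ⁻¹ := by
  intro u v
  have := h (σ⁻¹ u) (σ⁻¹ v)
  simpa using this.symm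

lemma aut_tri (h : IsGraphAut Γ σ) {u v : V} (ht : TriRel Γ u v) :
    TriRel Γ (σ u) (σ v) := by
  obtain ⟨ha, w, h1, h2⟩ := ht
  exact ⟨(h u v).2 ha, σ w, (h u w).2 h1, (h v w).2 h2⟩

lemma aut_eqvgen (h : IsGraphAut Γ σ) {u v : V}
    (ht : Relation.EqvGen (TriRel Γ) u v) : Relation.EqvGen (TriRel Γ) (σ u) (σ v) := by
  induction ht with
  | rel a b hab => exact Relation.EqvGen.rel _ _ (aut_tri h hab)
  | refl a => exact Relation.EqvGen.refl _
  | symm a b _ ih => exact ih.symm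
  | trans a b c _ _ ih1 ih2 => exact ih1.trans _ _ _ ih2

lemma eqvgen_snd {ι : Type*} {f : V → ι}
    (hf : ∀ u v, TriRel Γ u v → f u = f v) {u v : V}
    (h : Relation.EqvGen (TriRel Γ) u v) : f u = f v := by
  induction h with
  | rel a b hab => exact hf a b hab
  | refl a => rfl
  | symm a b _ ih => exact ih.symm
  | trans a b c _ _ ih1 ih2 => exact ih1.trans ih2

/-- generic blocks lemma -/
lemma blocks_image {ι : Type*} {f : V → ι}
    (hf1 : ∀ u v, TriRel Γ u v → f u = f v)
    (hf2 : ∀ u v, f u = f v → Relation.EqvGen (TriRel Γ) u v)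
    (h : IsGraphAut Γ σ) (i : ι) (v₀ : V) (hv₀ : f v₀ = i) :
    σ '' {p | f p = i} = {p | f p = f (σ v₀)} := by
  ext u
  constructor
  · rintro ⟨p, hp, rfl⟩
    exact (eqvgen_snd hf1 (aut_eqvgen h (hf2 v₀ p (by rw [hv₀, hp])))).symm
  · intro hu
    refine ⟨σ⁻¹ u, ?_, by simp⟩
    have h2 : Relation.EqvGen (TriRel Γ) (σ v₀) u := hf2 _ _ hu.symm
    have h3 := aut_eqvgen (aut_inv h) h2
    simp only [← Equiv.Perm.mul_apply, inv_mul_cancel, Equiv.Perm.one_apply] at h3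
    have := eqvgen_snd hf1 h3
    simp only [Set.mem_setOf_eq, ← this, hv₀]


section GroupPart
variable {G : Type*} [Group G] {m : ℕ} {R : Set G} {x : G}

lemma adjA_iff (p q : G × Fin m) :
    (ThetaA G m R x).Adj p q ↔ p ≠ q ∧
      (((p.2 = q.2 ∧ q.1 * p.1⁻¹ ∈ R) ∨
        (q.2.val = p.2.val + 1 ∧ q.1 = p.1) ∨
        (p.2.val = 0 ∧ q.2.val = m - 1 ∧ q.1 = x * p.1)) ∨
       ((q.2 = p.2 ∧ p.1 * q.1⁻¹ ∈ R) ∨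
        (p.2.val = q.2.val + 1 ∧ p.1 = q.1) ∨
        (q.2.val = 0 ∧ p.2.val = m - 1 ∧ p.1 = x * q.1))) := by
  simp [ThetaA, SimpleGraph.fromRel_adj]

lemma cayAdj (hRinv : ∀ r ∈ R, r⁻¹ ∈ R) {r : G} (hr : r ∈ R)
    (hrI : r ∉ cayIso G R) : ∃ u ∈ R, u ≠ r ∧ u * r⁻¹ ∈ R := by
  simp only [cayIso, Set.mem_setOf_eq, not_and, not_forall] at hrI
  obtain ⟨u, hu, hadj⟩ := hrI hr
  rw [not_not] at hadj
  simp only [Cay, SimpleGraph.fromRel_adj] at hadj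
  obtain ⟨hne, h⟩ := hadj
  refine ⟨u, hu, fun e => hne e.symm, ?_⟩
  rcases h with h | h
  · exact h
  · have := hRinv _ h
    simpa [mul_inv_rev] using this

lemma triA_step (h1R : (1:G) ∉ R) (hRinv : ∀ r ∈ R, r⁻¹ ∈ R)
    {r : G} (hr : r ∈ R \ cayIso G R) (g : G) (i : Fin m) :
    TriRel (ThetaA G m R x) (g, i) (r * g, i) := by
  obtain ⟨hrR, hrI⟩ := hr
  obtain ⟨u, huR, hur, hurR⟩ := cayAdj hRinv hrR hrI
  have hr1 : r ≠ 1 := fun e => h1R (e ▸ hrR)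
  have hu1 : u ≠ 1 := fun e => h1R (e ▸ huR)
  refine ⟨?_, (u * g, i), ?_, ?_⟩
  · rw [adjA_iff]
    refine ⟨?_, Or.inl (Or.inl ⟨rfl, by simpa using hrR⟩)⟩
    simp only [ne_eq, Prod.mk.injEq, and_true]
    intro e; exact hr1 (by simpa using congrArg (· * g⁻¹) e.symm)
  · rw [adjA_iff]
    refine ⟨?_, Or.inl (Or.inl ⟨rfl, by simpa using huR⟩)⟩
    simp only [ne_eq, Prod.mk.injEq, and_true]
    intro e; exact hu1 (by simpa using congrArg (· * g⁻¹) e.symm)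
  · rw [adjA_iff]
    refine ⟨?_, Or.inl (Or.inl ⟨rfl, ?_⟩)⟩
    · simp only [ne_eq, Prod.mk.injEq, and_true]
      intro e; exact hur (by simpa using (congrArg (· * g⁻¹) e).symm)
    · simpa [mul_assoc, mul_inv_rev, mul_inv_cancel_left] using hurR

lemma connA (h1R : (1:G) ∉ R) (hRinv : ∀ r ∈ R, r⁻¹ ∈ R)
    (hgen : Subgroup.closure (R \ cayIso G R) = ⊤) :
    ∀ u v : G × Fin m, u.2 = v.2 → Relation.EqvGen (TriRel (ThetaA G m R x)) u v := by
  have key : ∀ k ∈ Subgroup.closure (R \ cayIso G R), ∀ g : G, ∀ i : Fin m,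
      Relation.EqvGen (TriRel (ThetaA G m R x)) (g, i) (k * g, i) := by
    intro k hk
    induction hk using Subgroup.closure_induction with
    | mem r hr => exact fun g i => Relation.EqvGen.rel _ _ (triA_step h1R hRinv hr g i)
    | one => intro g i; simpa using Relation.EqvGen.refl (α := G × Fin m) (g, i)
    | mul a b _ _ iha ihb =>
      intro g i
      have h1 := ihb g i
      have h2 := iha (b * g) i
      rw [← mul_assoc] at h2
      exact h1.trans _ _ _ h2
    | inv a _ iha =>
      intro g i
      have := iha (a⁻¹ * g) i
      rw [← mul_assoc, mul_inv_cancel, one_mul] at this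
      exact this.symm
  rintro ⟨g, i⟩ ⟨h, j⟩ hij
  simp only at hij
  subst hij
  have := key (h * g⁻¹) (by simp [hgen]) g i
  simpa using this

lemma triFreeA (hm : 2 ≤ m) (hcase : 3 ≤ m ∨ (m = 2 ∧ x ∉ R ∧ x⁻¹ ∉ R))
    (hx1 : x ≠ 1) (h1R : (1:G) ∉ R) (hRinv : ∀ r ∈ R, r⁻¹ ∈ R) :
    ∀ u v : G × Fin m, TriRel (ThetaA G m R x) u v → u.2 = v.2 := by
  rintro ⟨a, i⟩ ⟨b, j⟩ ⟨huv, ⟨c, k⟩, huw, hvw⟩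
  simp only [ThetaA, SimpleGraph.fromRel_adj, ne_eq, Prod.mk.injEq, not_and] at huv huw hvw
  obtain ⟨huv0, huv⟩ := huv
  obtain ⟨huw0, huw⟩ := huw
  obtain ⟨hvw0, hvw⟩ := hvw
  simp only [Fin.ext_iff] at huv huw hvw huv0 huw0 hvw0 ⊢
  have hi := i.isLt; have hj := j.isLt; have hk := k.isLt
  -- contradiction helpers will be inline
  rcases hcase with h3 | ⟨hm2, hxR, hxiR⟩ <;>
  rcases huv with (⟨h1,h2⟩|⟨h1,h2⟩|⟨h1,h2,h3'⟩)|(⟨h1,h2⟩|⟨h1,h2⟩|⟨h1,h2,h3'⟩) <;>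
  rcases huw with (⟨g1,g2⟩|⟨g1,g2⟩|⟨g1,g2,g3⟩)|(⟨g1,g2⟩|⟨g1,g2⟩|⟨g1,g2,g3⟩) <;>
  rcases hvw with (⟨f1,f2⟩|⟨f1,f2⟩|⟨f1,f2,f3⟩)|(⟨f1,f2⟩|⟨f1,f2⟩|⟨f1,f2,f3⟩) <;>
    first
      | omega
      | (clear huv0 huw0 hvw0; subst_vars; first
          | omega
          | (simp_all [mul_assoc, mul_inv_rev, mul_inv_cancel_left, mul_inv_cancel_right,
              inv_mul_cancel_left, mul_eq_right, mul_right_inj, mul_left_inj,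
              mul_inv_cancel, inv_mul_cancel, right_eq_mul, left_eq_mul, mul_eq_left]; try omega))

lemma memR_symm (hRinv : ∀ r ∈ R, r⁻¹ ∈ R) {a b : G} (h : a * b⁻¹ ∈ R) :
    b * a⁻¹ ∈ R := by simpa [mul_inv_rev] using hRinv _ h

lemma adjB_00 (h1R : (1:G) ∉ R) (hRinv : ∀ r ∈ R, r⁻¹ ∈ R) (g b : G) :
    (ThetaB G R x).Adj (g,0) (b,0) ↔ b * g⁻¹ ∈ R := by
  simp only [ThetaB, SimpleGraph.fromRel_adj, ne_eq, Prod.mk.injEq]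
  constructor
  · rintro ⟨hne, h | h⟩
    · rcases h with ⟨-, (⟨-, h⟩ | ⟨h0, -⟩ | ⟨h0, -⟩)⟩
      · exact h
      all_goals exact absurd h0 (by norm_num)
    · rcases h with ⟨-, (⟨-, h⟩ | ⟨h0, -⟩ | ⟨h0, -⟩)⟩
      · exact memR_symm hRinv h
      all_goals exact absurd h0 (by norm_num)
  · intro h
    refine ⟨?_, Or.inl ⟨rfl, Or.inl ⟨rfl, h⟩⟩⟩
    rintro ⟨rfl, -⟩
    exact h1R (by simpa using h)

lemma adjB_01 (g b : G) :
    (ThetaB G R x).Adj (g,0) (b,1) ↔ (b * g⁻¹ ∈ R ∨ b = x * g) := by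
  simp only [ThetaB, SimpleGraph.fromRel_adj, ne_eq, Prod.mk.injEq]
  constructor
  · rintro ⟨hne, h | h⟩
    · rcases h with ⟨-, (⟨h0, -⟩ | ⟨-, h⟩ | ⟨-, h⟩)⟩
      · exact absurd h0 (by norm_num)
      · exact Or.inl h
      · exact Or.inr h
    · exact absurd h.1 (by norm_num)
  · intro h
    refine ⟨?_, Or.inl ⟨rfl, ?_⟩⟩
    · rintro ⟨-, h01⟩; exact absurd h01 (by norm_num)
    · rcases h with h | h
      · exact Or.inr (Or.inl ⟨rfl, h⟩)
      · exact Or.inr (Or.inr ⟨rfl, h⟩)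

lemma adjB_11 (g b : G) : ¬ (ThetaB G R x).Adj (g,1) (b,1) := by
  simp only [ThetaB, SimpleGraph.fromRel_adj, ne_eq, Prod.mk.injEq]
  rintro ⟨-, h | h⟩ <;> exact absurd h.1 (by norm_num)

lemma nbhdB_0 (h1R : (1:G) ∉ R) (hRinv : ∀ r ∈ R, r⁻¹ ∈ R) (g : G) :
    {u | (ThetaB G R x).Adj (g,0) u} =
      (fun r => (r*g, (0:Fin 2))) '' R ∪ (fun y => (y*g, (1:Fin 2))) '' (insert x R) := by
  ext ⟨b, l⟩
  have hl : l = 0 ∨ l = 1 := by omega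
  rcases hl with rfl | rfl
  · simp only [Set.mem_setOf_eq, adjB_00 h1R hRinv, Set.mem_union, Set.mem_image, Prod.mk.injEq]
    constructor
    · intro h
      exact Or.inl ⟨b * g⁻¹, h, by simp⟩
    · rintro (⟨r, hr, h, -⟩ | ⟨y, -, -, h⟩)
      · rw [← h]; simpa using hr
      · exact absurd h (by norm_num)
  · simp only [Set.mem_setOf_eq, adjB_01, Set.mem_union, Set.mem_image, Set.mem_insert_iff,
      Prod.mk.injEq]
    constructor
    · rintro (h | h)
      · exact Or.inr ⟨b * g⁻¹, Or.inr h, by simp⟩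
      · exact Or.inr ⟨x, Or.inl rfl, h.symm, trivial⟩
    · rintro (⟨r, -, -, h⟩ | ⟨y, hy, h, -⟩)
      · exact absurd h (by norm_num)
      · rcases hy with rfl | hy
        · exact Or.inr h.symm
        · exact Or.inl (by rw [← h]; simpa using hy)

lemma nbhdB_1 (h1R : (1:G) ∉ R) (hRinv : ∀ r ∈ R, r⁻¹ ∈ R) (g : G) :
    {u | (ThetaB G R x).Adj (g,1) u} =
      (fun z => (z*g, (0:Fin 2))) '' (insert x⁻¹ R) := by
  ext ⟨b, l⟩
  have hl : l = 0 ∨ l = 1 := by omega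
  rcases hl with rfl | rfl
  · have hadj : (ThetaB G R x).Adj (g,1) (b,0) ↔ (g * b⁻¹ ∈ R ∨ g = x * b) := by
      rw [SimpleGraph.adj_comm, adjB_01]
    simp only [Set.mem_setOf_eq, hadj, Set.mem_image, Set.mem_insert_iff, Prod.mk.injEq]
    constructor
    · rintro (h | h)
      · exact ⟨b * g⁻¹, Or.inr (memR_symm hRinv h), by simp⟩
      · refine ⟨x⁻¹, Or.inl rfl, ?_, trivial⟩
        rw [h]; simp
    · rintro ⟨z, hz, h, -⟩
      rcases hz with rfl | hz
      · exact Or.inr (by rw [← h]; simp)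
      · exact Or.inl (memR_symm hRinv (by rw [← h]; simpa using hz))
  · simp only [Set.mem_setOf_eq, Set.mem_image, Prod.mk.injEq]
    constructor
    · intro h; exact absurd h (adjB_11 g b)
    · rintro ⟨z, -, -, h⟩; exact absurd h (by norm_num)

end GroupPart

section FinitePart
variable {G : Type*} [Group G] [Finite G] {R : Set G} {x : G}

lemma inj_aux (g : G) (c : Fin 2) : Function.Injective (fun r : G => (r*g, c)) := by
  intro a b h
  have := congrArg Prod.fst h
  simpa using this

lemma degB_0 (h1R : (1:G) ∉ R) (hRinv : ∀ r ∈ R, r⁻¹ ∈ R) (g : G) :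
    {u | (ThetaB G R x).Adj (g,0) u}.ncard = R.ncard + (insert x R).ncard := by
  rw [nbhdB_0 h1R hRinv g, Set.ncard_union_eq, Set.ncard_image_of_injective _ (inj_aux g 0),
    Set.ncard_image_of_injective _ (inj_aux g 1)]
  · rw [Set.disjoint_iff_forall_ne]
    rintro u ⟨r, -, rfl⟩ v ⟨y, -, rfl⟩ h
    have := congrArg Prod.snd h
    simp at this

lemma degB_1 (h1R : (1:G) ∉ R) (hRinv : ∀ r ∈ R, r⁻¹ ∈ R) (g : G) :
    {u | (ThetaB G R x).Adj (g,1) u}.ncard = (insert x⁻¹ R).ncard := by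
  rw [nbhdB_1 h1R hRinv g, Set.ncard_image_of_injective _ (inj_aux g 0)]

lemma insert_ncard_eq (hRinv : ∀ r ∈ R, r⁻¹ ∈ R) :
    (insert x⁻¹ R).ncard = (insert x R).ncard := by
  by_cases hx : x ∈ R
  · rw [Set.insert_eq_self.2 hx, Set.insert_eq_self.2 (hRinv _ hx)]
  · have hx' : x⁻¹ ∉ R := fun h => hx (by simpa using hRinv _ h)
    rw [Set.ncard_insert_of_notMem hx' (Set.toFinite _),
      Set.ncard_insert_of_notMem hx (Set.toFinite _)]

lemma sndB (h1R : (1:G) ∉ R) (hRinv : ∀ r ∈ R, r⁻¹ ∈ R) (hR : R.Nonempty)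
    (σ : Equiv.Perm (G × Fin 2)) (hσ : IsGraphAut (ThetaB G R x) σ) (v : G × Fin 2) :
    (σ v).2 = v.2 := by
  have hdeg : {u | (ThetaB G R x).Adj (σ v) u}.ncard = {u | (ThetaB G R x).Adj v u}.ncard := by
    have himg : {u | (ThetaB G R x).Adj (σ v) u} = σ '' {u | (ThetaB G R x).Adj v u} := by
      ext u
      simp only [Set.mem_setOf_eq, Set.mem_image]
      constructor
      · intro h
        refine ⟨σ⁻¹ u, ?_, by simp⟩
        have := (hσ v (σ⁻¹ u)).1
        simp only [← Equiv.Perm.mul_apply, mul_inv_cancel, Equiv.Perm.one_apply] at this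
        exact this h
      · rintro ⟨w, hw, rfl⟩
        exact (hσ v w).2 hw
    rw [himg, Set.ncard_image_of_injective _ σ.injective]
  have hRn : R.ncard ≠ 0 := by
    have := Set.ncard_pos (Set.toFinite R) |>.2 hR
    omega
  have hdet : ∀ w w' : G × Fin 2,
      {u | (ThetaB G R x).Adj w u}.ncard = {u | (ThetaB G R x).Adj w' u}.ncard →
      w.2 = w'.2 := by
    rintro ⟨a, i⟩ ⟨b, j⟩ h
    have hi : i = 0 ∨ i = 1 := by omega
    have hj : j = 0 ∨ j = 1 := by omega
    rcases hi with rfl | rfl <;> rcases hj with rfl | rfl <;>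
      simp only [degB_0 h1R hRinv, degB_1 h1R hRinv, insert_ncard_eq hRinv] at h <;>
      first | rfl | (exfalso; omega)
  exact hdet (σ v) v hdeg

end FinitePart
end ThetaAux

/-- under the hypotheses of the Θ-construction, every automorphism of
`Θᵐ(G,R,x)` maps each block `G_i = G × {i}` onto some block `G_j`. -/
theorem statement_6 (G : Type*) [Group G] [Finite G]
    (hG : ¬ ∀ a b : G, a * b = b * a)
    (m : ℕ) (hm : 2 ≤ m)
    (R : Set G) (h1R : (1 : G) ∉ R) (hRinv : ∀ r ∈ R, r⁻¹ ∈ R)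
    (hGRR : IsCayleyGRR G R)
    (hI : (cayIso G R).ncard ≤ 1)
    (hgen : Subgroup.closure (R \ cayIso G R) = ⊤)
    (x : G) :
    (((3 ≤ m ∧ x ∉ Subgroup.center G ∧ 2 < orderOf x) ∨
      (m = 2 ∧ (∀ g : G, g ^ 2 ∈ Subgroup.center G) ∧
        x ∉ Subgroup.center G ∧ x ∉ R ∧ 2 < orderOf x)) →
      ∀ σ : Equiv.Perm (G × Fin m), IsGraphAut (ThetaA G m R x) σ →
        ∀ i : Fin m, ∃ j : Fin m,
          ⇑σ '' {p : G × Fin m | p.2 = i} = {p : G × Fin m | p.2 = j}) ∧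
    ((m = 2 ∧ x ^ 2 ∉ Subgroup.center G) →
      ∀ σ : Equiv.Perm (G × Fin 2), IsGraphAut (ThetaB G R x) σ →
        ∀ i : Fin 2, ∃ j : Fin 2,
          ⇑σ '' {p : G × Fin 2 | p.2 = i} = {p : G × Fin 2 | p.2 = j}) := by
  constructor
  · -- Case A
    rintro hcase σ hσ i
    have hx1 : x ≠ 1 := by
      rcases hcase with ⟨-, hxZ, -⟩ | ⟨-, -, hxZ, -, -⟩ <;>
        exact fun e => hxZ (e ▸ Subgroup.one_mem _)
    have hcase' : 3 ≤ m ∨ (m = 2 ∧ x ∉ R ∧ x⁻¹ ∉ R) := by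
      rcases hcase with ⟨h3, -⟩ | ⟨hm2, -, -, hxR, -⟩
      · exact Or.inl h3
      · exact Or.inr ⟨hm2, hxR, fun h => hxR (by simpa using hRinv _ h)⟩
    exact ⟨(σ (1, i)).2,
      blocks_image (f := fun p => p.2) (triFreeA hm hcase' hx1 h1R hRinv)
        (connA h1R hRinv hgen) hσ i (1, i) rfl⟩
  · -- Case B
    rintro ⟨hm2, hx2⟩ σ hσ i
    have hR : R.Nonempty := by
      rcases Set.eq_empty_or_nonempty R with hRe | h
      · exfalso
        rw [hRe] at hgen
        simp only [Set.empty_diff, Subgroup.closure_empty] at hgen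
        refine hG fun a b => ?_
        have ha : a ∈ (⊥ : Subgroup G) := hgen ▸ Subgroup.mem_top a
        have hb : b ∈ (⊥ : Subgroup G) := hgen ▸ Subgroup.mem_top b
        rw [Subgroup.mem_bot] at ha hb
        rw [ha, hb]
      · exact h
    refine ⟨i, ?_⟩
    ext u
    simp only [Set.mem_image, Set.mem_setOf_eq]
    constructor
    · rintro ⟨p, hp, rfl⟩
      rw [sndB h1R hRinv hR σ hσ p, hp]
    · intro hu
      refine ⟨σ⁻¹ u, ?_, by simp⟩
      rw [show (σ⁻¹ u).2 = u.2 from sndB h1R hRinv hR σ⁻¹ (aut_inv hσ) u, hu]
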